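/- Let K, H, K̃, H̃ be finite-dimensional complex Hilbert spaces and E : K̃ → K, F : H̃ → H injective linear operators. For a linear map φ̃ : B(K̃) → B(H̃), define L_{E,F}φ̃ : B(K) → B(H) by (L_{E,F}φ̃)(X) = F·φ̃(E*XE)·F*. If φ̃ is an exposed positive map, then L_{E,F}φ̃ is an exposed positive map. -/

import Mathlib

open scoped ComplexOrder
open Matrix

noncomputable section
namespace Paper

/-- A map between matrix algebras is positive if it sends positive semidefinite
matrices to positive semidefinite matrices. -/
def IsPosMap {m n : Type*} [Fintype m] [Fintype n]
    (φ : Matrix m m ℂ → Matrix n n ℂ) : Prop :=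
  ∀ X : Matrix m m ℂ, X.PosSemidef → (φ X).PosSemidef

/-- The rank one operator `ηη*`, i.e. `ζ ↦ ⟨η, ζ⟩ η`. -/
def rankOne {m : Type*} (η : m → ℂ) : Matrix m m ℂ :=
  Matrix.vecMulVec η (star η)

/-- The Choi matrix `∑ E_{ij} ⊗ φ(E_{ij})` of a map `φ`. -/
def choi {m n : Type*} [Fintype m] [DecidableEq m]
    (φ : Matrix m m ℂ → Matrix n n ℂ) : Matrix (m × n) (m × n) ℂ :=
  Matrix.of fun p q => φ (Matrix.single p.1 q.1 1) p.2 q.2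

/-- A map is completely positive iff its Choi matrix is positive semidefinite. -/
def IsCP {m n : Type*} [Fintype m] [DecidableEq m] [Fintype n]
    (φ : Matrix m m ℂ → Matrix n n ℂ) : Prop :=
  (choi φ).PosSemidef

/-- A map is completely copositive iff `X ↦ φ(Xᵀ)` is completely positive. -/
def IsCCP {m n : Type*} [Fintype m] [DecidableEq m] [Fintype n]
    (φ : Matrix m m ℂ → Matrix n n ℂ) : Prop :=
  IsCP fun X => φ Xᵀ

/-- A map is decomposable iff it is the sum of a completely positive and a
completely copositive (linear) map. -/
def Decomposable {m n : Type*} [Fintype m] [DecidableEq m] [Fintype n]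
    (φ : Matrix m m ℂ → Matrix n n ℂ) : Prop :=
  ∃ φ₁ φ₂ : Matrix m m ℂ →ₗ[ℂ] Matrix n n ℂ,
    IsCP (⇑φ₁) ∧ IsCCP (⇑φ₂) ∧ ∀ X, φ X = φ₁ X + φ₂ X

/-- The ampliation `id_{M₂(ℂ)} ⊗ φ`. -/
def ampl2 {m n : Type*} (φ : Matrix m m ℂ → Matrix n n ℂ)
    (Y : Matrix (Fin 2 × m) (Fin 2 × m) ℂ) : Matrix (Fin 2 × n) (Fin 2 × n) ℂ :=
  Matrix.of fun p q => φ (Matrix.of fun a b => Y (p.1, a) (q.1, b)) p.2 q.2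

/-- The ampliation `tran_{M₂(ℂ)} ⊗ φ`. -/
def ampl2T {m n : Type*} (φ : Matrix m m ℂ → Matrix n n ℂ)
    (Y : Matrix (Fin 2 × m) (Fin 2 × m) ℂ) : Matrix (Fin 2 × n) (Fin 2 × n) ℂ :=
  Matrix.of fun p q => φ (Matrix.of fun a b => Y (q.1, a) (p.1, b)) p.2 q.2

/-- `φ` is 2-positive if `id_{M₂(ℂ)} ⊗ φ` is positive. -/
def Is2Pos {m n : Type*} [Fintype m] [Fintype n]
    (φ : Matrix m m ℂ → Matrix n n ℂ) : Prop :=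
  IsPosMap (ampl2 φ)

/-- `φ` is 2-copositive if `tran_{M₂(ℂ)} ⊗ φ` is positive. -/
def Is2Copos {m n : Type*} [Fintype m] [Fintype n]
    (φ : Matrix m m ℂ → Matrix n n ℂ) : Prop :=
  IsPosMap (ampl2T φ)

/-- A positive map `φ` is exposed if every positive (linear) map `ψ` vanishing
(in the sense `⟨y, ψ(ηη*) y⟩ = 0`) wherever `φ` vanishes is a nonnegative
multiple of `φ`. -/
def IsExposed {m n : Type*} [Fintype m] [Fintype n]
    (φ : Matrix m m ℂ → Matrix n n ℂ) : Prop :=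
  IsPosMap φ ∧
    ∀ ψ : Matrix m m ℂ →ₗ[ℂ] Matrix n n ℂ, IsPosMap ⇑ψ →
      (∀ (η : m → ℂ) (y : n → ℂ),
        star y ⬝ᵥ (φ (rankOne η)).mulVec y = 0 →
          star y ⬝ᵥ (ψ (rankOne η)).mulVec y = 0) →
      ∃ c : ℝ, 0 ≤ c ∧ ∀ X, ψ X = (c : ℂ) • φ X

/-- A positive map `φ` is optimal if there is no nonzero completely positive map
`ψ` with `φ − ψ` positive. -/
def IsOptimal {m n : Type*} [Fintype m] [DecidableEq m] [Fintype n]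
    (φ : Matrix m m ℂ → Matrix n n ℂ) : Prop :=
  ¬∃ ψ : Matrix m m ℂ →ₗ[ℂ] Matrix n n ℂ,
      ψ ≠ 0 ∧ IsCP (⇑ψ) ∧ IsPosMap fun X => φ X - ψ X

/-- The index type of the direct sum `ℂᵃ ⊕ ℂᵇ ⊕ ℂ`. -/
abbrev TI (a b : ℕ) := Fin a ⊕ (Fin b ⊕ Unit)

/-- The index of the distinguished one-dimensional summand. -/
def tidx {a b : ℕ} : TI a b := Sum.inr (Sum.inr ())

/-- Block `X₁₁` of a matrix on `ℂᵃ ⊕ ℂᵇ ⊕ ℂ`. -/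
def blk11 {a b : ℕ} (X : Matrix (TI a b) (TI a b) ℂ) : Matrix (Fin a) (Fin a) ℂ :=
  Matrix.of fun i j => X (Sum.inl i) (Sum.inl j)

/-- Block `X₂₂`. -/
def blk22 {a b : ℕ} (X : Matrix (TI a b) (TI a b) ℂ) : Matrix (Fin b) (Fin b) ℂ :=
  Matrix.of fun i j => X (Sum.inr (Sum.inl i)) (Sum.inr (Sum.inl j))

/-- Block `X₁₃`, viewed as a column vector. -/
def blk13 {a b : ℕ} (X : Matrix (TI a b) (TI a b) ℂ) : Fin a → ℂ :=
  fun i => X (Sum.inl i) tidx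

/-- Block `X₃₁` (equivalently, the vector `X₃₁ᵀ`). -/
def blk31 {a b : ℕ} (X : Matrix (TI a b) (TI a b) ℂ) : Fin a → ℂ :=
  fun i => X tidx (Sum.inl i)

/-- Block `X₂₃`, viewed as a column vector. -/
def blk23 {a b : ℕ} (X : Matrix (TI a b) (TI a b) ℂ) : Fin b → ℂ :=
  fun i => X (Sum.inr (Sum.inl i)) tidx

/-- Block `X₃₂` (equivalently, the vector `X₃₂ᵀ`). -/
def blk32 {a b : ℕ} (X : Matrix (TI a b) (TI a b) ℂ) : Fin b → ℂ :=
  fun i => X tidx (Sum.inr (Sum.inl i))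

/-- `P` is the orthogonal projection onto the range of `A`: it is Hermitian,
idempotent, and has the same range as `A`. -/
def IsOrthProjOnRange {n m : Type*} [Fintype n] [Fintype m]
    (P : Matrix n n ℂ) (A : Matrix n m ℂ) : Prop :=
  P.IsHermitian ∧ P * P = P ∧
    LinearMap.range P.mulVecLin = LinearMap.range A.mulVecLin

/-- The merging of the maps `φ₁`, `φ₂` by means of the operators `B₁, C₁, B₂, C₂`,
the functionals `ω₁, ω₂`, with `P₁, P₂` the orthogonal projections onto the ranges
of `φ₁(1)`, `φ₂(1)`. -/
def merging {k₁ k₂ h₁ h₂ : ℕ}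
    (φ₁ : Matrix (Fin k₁) (Fin k₁) ℂ →ₗ[ℂ] Matrix (Fin h₁) (Fin h₁) ℂ)
    (φ₂ : Matrix (Fin k₂) (Fin k₂) ℂ →ₗ[ℂ] Matrix (Fin h₂) (Fin h₂) ℂ)
    (B₁ C₁ : Matrix (Fin h₁) (Fin k₁) ℂ) (B₂ C₂ : Matrix (Fin h₂) (Fin k₂) ℂ)
    (ω₁ : Matrix (Fin k₁) (Fin k₁) ℂ →ₗ[ℂ] ℂ) (ω₂ : Matrix (Fin k₂) (Fin k₂) ℂ →ₗ[ℂ] ℂ)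
    (P₁ : Matrix (Fin h₁) (Fin h₁) ℂ) (P₂ : Matrix (Fin h₂) (Fin h₂) ℂ)
    (X : Matrix (TI k₁ k₂) (TI k₁ k₂) ℂ) : Matrix (TI h₁ h₂) (TI h₁ h₂) ℂ :=
  Matrix.of fun p q =>
    match p, q with
    | Sum.inl a, Sum.inl b => φ₁ (blk11 X) a b + ω₂ (blk22 X) * P₁ a b
    | Sum.inl _, Sum.inr (Sum.inl _) => 0
    | Sum.inl a, Sum.inr (Sum.inr _) => (B₁.mulVec (blk13 X) + C₁.mulVec (blk31 X)) a
    | Sum.inr (Sum.inl _), Sum.inl _ => 0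
    | Sum.inr (Sum.inl a), Sum.inr (Sum.inl b) => φ₂ (blk22 X) a b + ω₁ (blk11 X) * P₂ a b
    | Sum.inr (Sum.inl a), Sum.inr (Sum.inr _) => (B₂.mulVec (blk23 X) + C₂.mulVec (blk32 X)) a
    | Sum.inr (Sum.inr _), Sum.inl b =>
        (Matrix.vecMul (blk31 X) B₁ᴴ + Matrix.vecMul (blk13 X) C₁ᴴ) b
    | Sum.inr (Sum.inr _), Sum.inr (Sum.inl b) =>
        (Matrix.vecMul (blk32 X) B₂ᴴ + Matrix.vecMul (blk23 X) C₂ᴴ) b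
    | Sum.inr (Sum.inr _), Sum.inr (Sum.inr _) => X tidx tidx

/-- The quantity `μᵢ(η, y) = √⟨y, φᵢ(ηη*) y⟩`. -/
def muQ {k h : ℕ} (φ : Matrix (Fin k) (Fin k) ℂ →ₗ[ℂ] Matrix (Fin h) (Fin h) ℂ)
    (η : Fin k → ℂ) (y : Fin h → ℂ) : ℝ :=
  Real.sqrt (star y ⬝ᵥ (φ (rankOne η)).mulVec y).re

/-- The quantity `εᵢ(η, y) = |⟨y, Bη⟩| + |⟨y, C η̄⟩|`. -/
def epsQ {k h : ℕ} (B C : Matrix (Fin h) (Fin k) ℂ) (η : Fin k → ℂ) (y : Fin h → ℂ) : ℝ :=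
  ‖star y ⬝ᵥ B.mulVec η‖ + ‖star y ⬝ᵥ C.mulVec (star η)‖

/-- The quantity `δᵢ(η, y) = √(μᵢ(η,y)² − εᵢ(η,y)²)`. -/
def deltaQ {k h : ℕ} (φ : Matrix (Fin k) (Fin k) ℂ →ₗ[ℂ] Matrix (Fin h) (Fin h) ℂ)
    (B C : Matrix (Fin h) (Fin k) ℂ) (η : Fin k → ℂ) (y : Fin h → ℂ) : ℝ :=
  Real.sqrt (muQ φ η y ^ 2 - epsQ B C η y ^ 2)

/-- The quantity `σᵢ(η, y) = √(ωᵢ(ηη*))·‖P y‖`. -/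
def sigmaQ {k h : ℕ} (ω : Matrix (Fin k) (Fin k) ℂ →ₗ[ℂ] ℂ)
    (P : Matrix (Fin h) (Fin h) ℂ) (η : Fin k → ℂ) (y : Fin h → ℂ) : ℝ :=
  Real.sqrt (ω (rankOne η)).re * Real.sqrt (star (P.mulVec y) ⬝ᵥ P.mulVec y).re

section Helpers

def vv {m : Type*} (u v : m → ℂ) : Matrix m m ℂ := Matrix.vecMulVec u (star v)

lemma vv_apply {m : Type*} (u v : m → ℂ) (a b : m) : vv u v a b = u a * star (v b) := by
  simp [vv, Matrix.vecMulVec_apply]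

lemma rankOne_eq_vv {m : Type*} (η : m → ℂ) : rankOne η = vv η η := rfl

lemma vv_add_add {m : Type*} (u v : m → ℂ) :
    vv (u + v) (u + v) = vv u u + vv u v + vv v u + vv v v := by
  ext a b; simp [vv_apply]; ring

lemma vv_smul_left {m : Type*} (c : ℂ) (u v : m → ℂ) : vv (c • u) v = c • vv u v := by
  ext a b; simp [vv_apply]; ring

lemma vv_smul_right {m : Type*} (c : ℂ) (u v : m → ℂ) :
    vv u (c • v) = (starRingEnd ℂ c) • vv u v := by
  ext a b; simp [vv_apply]; ring

lemma rankOne_zero {m : Type*} : rankOne (0 : m → ℂ) = 0 := by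
  ext a b; simp [rankOne, Matrix.vecMulVec_apply]

lemma rankOne_I_smul {m : Type*} (η : m → ℂ) : rankOne (Complex.I • η) = rankOne η := by
  ext a b
  simp [rankOne, Matrix.vecMulVec_apply, Complex.conj_I]
  ring_nf
  rw [Complex.I_sq]
  ring

lemma conj_vv {m n : Type*} [Fintype m] [Fintype n] (A : Matrix n m ℂ) (u v : m → ℂ) :
    A * vv u v * Aᴴ = vv (A.mulVec u) (A.mulVec v) := by
  ext a b
  simp [vv_apply, Matrix.mul_apply, Matrix.mulVec, dotProduct,
    Matrix.conjTranspose_apply, Finset.sum_mul, Finset.mul_sum, map_sum]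
  exact Finset.sum_congr rfl fun x _ => Finset.sum_congr rfl fun i _ => by ring

lemma conj_rankOne {m n : Type*} [Fintype m] [Fintype n] (A : Matrix n m ℂ) (u : m → ℂ) :
    A * rankOne u * Aᴴ = rankOne (A.mulVec u) := conj_vv A u u

lemma rankOne_posSemidef {k : Type*} [Fintype k] (η : k → ℂ) : (rankOne η).PosSemidef := by
  have : rankOne η = Matrix.replicateCol Unit η * (Matrix.replicateCol Unit η)ᴴ := by
    rw [Matrix.conjTranspose_replicateCol, rankOne, Matrix.vecMulVec_eq Unit]
  rw [this]
  exact Matrix.posSemidef_self_mul_conjTranspose _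

lemma quadform_conj {n m : Type*} [Fintype n] [Fintype m]
    (B : Matrix m n ℂ) (M : Matrix m m ℂ) (y : n → ℂ) :
    star y ⬝ᵥ (Bᴴ * M * B).mulVec y = star (B.mulVec y) ⬝ᵥ M.mulVec (B.mulVec y) := by
  simp only [Matrix.star_mulVec, Matrix.dotProduct_mulVec, Matrix.vecMul_vecMul]

/-- Quadratic-form polarization: a matrix with vanishing quadratic form is zero. -/
lemma quadZero {n : Type*} [Fintype n] [DecidableEq n] (M : Matrix n n ℂ)
    (h : ∀ y : n → ℂ, star y ⬝ᵥ M.mulVec y = 0) : M = 0 := by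
  have expand : ∀ (a b : n) (c : ℂ), star (Pi.single a 1 + Pi.single b c : n → ℂ) ⬝ᵥ
      M.mulVec (Pi.single a 1 + Pi.single b c : n → ℂ)
      = M a a + (starRingEnd ℂ c) * M b a + c * M a b + (starRingEnd ℂ c) * c * M b b := by
    intro a b c
    have hs : star (Pi.single a 1 + Pi.single b c : n → ℂ)
        = (Pi.single a 1 + Pi.single b (starRingEnd ℂ c) : n → ℂ) := by
      funext i
      simp [Pi.single_apply, apply_ite (starRingEnd ℂ)]
    rw [hs, Matrix.mulVec_add, Matrix.mulVec_single, Matrix.mulVec_single]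
    simp [add_dotProduct, single_dotProduct, dotProduct_add]
    ring
  have hd : ∀ a, M a a = 0 := by
    intro a
    have := h (Pi.single a 1 + Pi.single a 0)
    rw [expand] at this
    simpa using this
  ext a b
  by_cases hab : a = b
  · subst hab; simp [hd a]
  · have h1 := h (Pi.single a 1 + Pi.single b 1)
    have hI := h (Pi.single a 1 + Pi.single b Complex.I)
    rw [expand] at h1 hI
    simp [hd, Complex.conj_I] at h1 hI
    have h2 : M a b - M b a = 0 := by
      have : Complex.I * (M a b - M b a) = 0 := by linear_combination hI
      rcases mul_eq_zero.mp this with h | h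
      · exact absurd h Complex.I_ne_zero
      · exact h
    show M a b = 0
    linear_combination (h1 + h2) / 2

/-- Any linear map vanishing on all `rankOne η` vanishes on all `vv u v`. -/
lemma vv_vanish {k : Type*} {M : Type*} [AddCommGroup M] [Module ℂ M]
    (T : Matrix k k ℂ →ₗ[ℂ] M) (h : ∀ η, T (rankOne η) = 0) (u v : k → ℂ) :
    T (vv u v) = 0 := by
  have key : ∀ u v : k → ℂ, T (vv u v) + T (vv v u) = 0 := by
    intro u v
    have := h (u + v)
    rw [rankOne_eq_vv, vv_add_add, map_add, map_add, map_add,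
      ← rankOne_eq_vv, ← rankOne_eq_vv, h u, h v] at this
    simpa using this
  have h1 := key u v
  have h2 := key u (Complex.I • v)
  rw [vv_smul_left, vv_smul_right, LinearMap.map_smul, LinearMap.map_smul,
    Complex.conj_I] at h2
  have hba : T (vv v u) = T (vv u v) := by
    have h4 : Complex.I • (T (vv v u) - T (vv u v)) = 0 := by
      calc Complex.I • (T (vv v u) - T (vv u v))
          = (-Complex.I) • T (vv u v) + Complex.I • T (vv v u) := by module
        _ = 0 := h2
    rcases smul_eq_zero.mp h4 with h | h
    · exact absurd h Complex.I_ne_zero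
    · exact sub_eq_zero.mp h
  have h5 : (2:ℂ) • T (vv u v) = 0 := by
    calc (2:ℂ) • T (vv u v) = T (vv u v) + T (vv v u) := by rw [hba]; module
      _ = 0 := h1
  rcases smul_eq_zero.mp h5 with h | h
  · norm_num at h
  · exact h

/-- A linear map vanishing on all rank-one projections vanishes. -/
lemma span_vanish {k : Type*} {M : Type*} [Fintype k] [DecidableEq k]
    [AddCommGroup M] [Module ℂ M]
    (T : Matrix k k ℂ →ₗ[ℂ] M) (h : ∀ η, T (rankOne η) = 0) (X : Matrix k k ℂ) :
    T X = 0 := by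
  have hX : X = ∑ j, vv (fun i => X i j) (Pi.single j 1) := by
    ext a b
    simp [Matrix.sum_apply, vv_apply, Pi.single_apply, apply_ite (star : ℂ → ℂ)]
  rw [hX, map_sum]
  simp [vv_vanish T h]

lemma slope_zero (h k : ℂ) (H : ∀ t : ℝ, 0 ≤ (t:ℂ) * h + k) : h = 0 := by
  have him : h.im = 0 := by
    have h1 := (Complex.nonneg_iff.mp (H 1)).2
    have h2 := (Complex.nonneg_iff.mp (H (-1))).2
    simp [Complex.add_im, Complex.mul_im] at h1 h2
    linarith
  have hre : h.re = 0 := by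
    by_contra hne
    have := (Complex.nonneg_iff.mp (H ((-k.re - 1)/h.re))).1
    simp [Complex.add_re, Complex.mul_re, him] at this
    rw [div_mul_cancel₀ _ hne] at this
    linarith
  exact Complex.ext hre him

lemma expand_real {k : Type*} (t : ℝ) (ζ ξ : k → ℂ) :
    rankOne ((t:ℂ) • ζ + ξ)
      = ((t:ℂ)^2) • rankOne ζ + (t:ℂ) • (vv ζ ξ + vv ξ ζ) + rankOne ξ := by
  ext a b
  simp [rankOne, vv_apply, Matrix.vecMulVec_apply, Complex.conj_ofReal]
  ring

lemma eq_zero_of_mulVec {m n : Type*} [Fintype n] [DecidableEq n]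
    (M : Matrix m n ℂ) (h : ∀ v, M.mulVec v = 0) : M = 0 := by
  ext i j
  have := congrFun (h (Pi.single j 1)) i
  simpa [Matrix.mulVec_single] using this

/-- The sandwich `X ↦ A * X * B` as a linear map. -/
def sandL {a b c d : Type*} [Fintype b] [Fintype c]
    (A : Matrix a b ℂ) (B : Matrix c d ℂ) : Matrix b c ℂ →ₗ[ℂ] Matrix a d ℂ where
  toFun X := A * X * B
  map_add' X Y := by show A * (X + Y) * B = _; rw [Matrix.mul_add, Matrix.add_mul]
  map_smul' r X := by show A * (r • X) * B = r • (A * X * B); rw [Matrix.mul_smul, Matrix.smul_mul]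

/-- The quadratic form `M ↦ ⟨y, My⟩` as a linear functional. -/
def qformL {n : Type*} [Fintype n] (y : n → ℂ) : Matrix n n ℂ →ₗ[ℂ] ℂ where
  toFun M := star y ⬝ᵥ M.mulVec y
  map_add' M N := by simp [Matrix.add_mulVec]
  map_smul' c M := by simp [Matrix.smul_mulVec]

end Helpers

section Helpers2

/-- Polarization for positive maps: if `ψ(ζζ*) = 0` then `ψ(ζξ*) = ψ(ξζ*) = 0`. -/
lemma pos_polar {k h : Type*} [Fintype k] [Fintype h] [DecidableEq h]
    (ψ : Matrix k k ℂ →ₗ[ℂ] Matrix h h ℂ) (hψ : IsPosMap ⇑ψ)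
    (ζ : k → ℂ) (hζ : ψ (rankOne ζ) = 0) (ξ : k → ℂ) :
    ψ (vv ζ ξ) = 0 ∧ ψ (vv ξ ζ) = 0 := by
  have key : ∀ ζ : k → ℂ, ψ (rankOne ζ) = 0 →
      ∀ ξ, ψ (vv ζ ξ) + ψ (vv ξ ζ) = 0 := by
    intro ζ hζ ξ
    have hsum : ψ (vv ζ ξ + vv ξ ζ) = 0 := by
      apply quadZero; intro y
      apply slope_zero _ (star y ⬝ᵥ (ψ (rankOne ξ)).mulVec y)
      intro t
      have hP : (ψ (rankOne ((t:ℂ) • ζ + ξ))).PosSemidef := hψ _ (rankOne_posSemidef _)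
      have h2 := hP.dotProduct_mulVec_nonneg y
      rw [expand_real, map_add, map_add, LinearMap.map_smul, LinearMap.map_smul, hζ,
        smul_zero, zero_add, Matrix.add_mulVec, Matrix.smul_mulVec,
        dotProduct_add, dotProduct_smul, smul_eq_mul] at h2
      exact h2
    rw [map_add] at hsum; exact hsum
  have h1 := key ζ hζ ξ
  have hζI : ψ (rankOne (Complex.I • ζ)) = 0 := by rw [rankOne_I_smul]; exact hζ
  have h2 := key _ hζI ξ
  rw [vv_smul_left, show vv ξ (Complex.I • ζ) = (-Complex.I) • vv ξ ζ by
      rw [vv_smul_right, Complex.conj_I], LinearMap.map_smul, LinearMap.map_smul] at h2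
  have hba : ψ (vv ξ ζ) = ψ (vv ζ ξ) := by
    have h4 : Complex.I • (ψ (vv ζ ξ) - ψ (vv ξ ζ)) = 0 := by
      calc Complex.I • (ψ (vv ζ ξ) - ψ (vv ξ ζ))
          = Complex.I • ψ (vv ζ ξ) + (-Complex.I) • ψ (vv ξ ζ) := by module
        _ = 0 := h2
    rcases smul_eq_zero.mp h4 with h | h
    · exact absurd h Complex.I_ne_zero
    · exact (sub_eq_zero.mp h).symm
  have h5 : (2:ℂ) • ψ (vv ζ ξ) = 0 := by
    calc (2:ℂ) • ψ (vv ζ ξ) = ψ (vv ζ ξ) + ψ (vv ξ ζ) := by rw [hba]; module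
      _ = 0 := h1
  rcases smul_eq_zero.mp h5 with h | h
  · norm_num at h
  · exact ⟨h, by rw [hba, h]⟩

/-- An injective matrix has a left inverse with Hermitian associated projection. -/
lemma exists_leftInv {n m : Type*} [Fintype n] [Fintype m] [DecidableEq n] [DecidableEq m]
    (A : Matrix n m ℂ) (hA : Function.Injective A.mulVec) :
    ∃ G : Matrix m n ℂ, G * A = 1 ∧ (A * G)ᴴ = A * G := by
  have hker : ∀ u, (Aᴴ * A).mulVec u = 0 → u = 0 := by
    intro u h0
    have hq : star (A.mulVec u) ⬝ᵥ (A.mulVec u) = 0 := by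
      calc star (A.mulVec u) ⬝ᵥ (A.mulVec u)
          = star u ⬝ᵥ (Aᴴ * A).mulVec u := by
            simp only [Matrix.star_mulVec, Matrix.dotProduct_mulVec, Matrix.vecMul_vecMul]
        _ = 0 := by rw [h0, dotProduct_zero]
    have := dotProduct_star_self_eq_zero.mp hq
    apply hA
    rw [this, Matrix.mulVec_zero]
  have hinj : Function.Injective (Aᴴ * A).mulVec := by
    intro u v huv
    have : (Aᴴ * A).mulVec (u - v) = 0 := by
      rw [Matrix.mulVec_sub, huv, sub_self]
    have := hker _ this
    exact sub_eq_zero.mp this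
  have hUnit : IsUnit (Aᴴ * A) := Matrix.mulVec_injective_iff_isUnit.mp hinj
  have hdet : IsUnit (Aᴴ * A).det := (Matrix.isUnit_iff_isUnit_det _).mp hUnit
  refine ⟨(Aᴴ * A)⁻¹ * Aᴴ, ?_, ?_⟩
  · rw [Matrix.mul_assoc, Matrix.nonsing_inv_mul _ hdet]
  · have hherm : ((Aᴴ * A)⁻¹)ᴴ = (Aᴴ * A)⁻¹ := by
      rw [Matrix.conjTranspose_nonsing_inv]
      congr 1
      simp [Matrix.conjTranspose_mul]
    calc (A * ((Aᴴ * A)⁻¹ * Aᴴ))ᴴ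
        = A * (((Aᴴ * A)⁻¹)ᴴ * Aᴴ) := by
          simp only [Matrix.conjTranspose_mul, Matrix.conjTranspose_conjTranspose,
            Matrix.mul_assoc]
      _ = A * ((Aᴴ * A)⁻¹ * Aᴴ) := by rw [hherm]

end Helpers2

/-- Lifting lemma. If `E`, `F` are injective and `φ̃` is an
exposed positive map, then `X ↦ F φ̃(E*XE) F*` is an exposed positive map. -/
theorem statement8 {k k' h h' : ℕ}
    (E : Matrix (Fin k) (Fin k') ℂ) (F : Matrix (Fin h) (Fin h') ℂ)
    (hE : Function.Injective E.mulVec) (hF : Function.Injective F.mulVec)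
    (φ : Matrix (Fin k') (Fin k') ℂ →ₗ[ℂ] Matrix (Fin h') (Fin h') ℂ)
    (hφ : IsExposed ⇑φ) :
    IsExposed fun X : Matrix (Fin k) (Fin k) ℂ => F * φ (Eᴴ * X * E) * Fᴴ := by
  constructor
  · intro X hX
    exact (hφ.1 _ (hX.conjTranspose_mul_mul_same E)).mul_mul_conjTranspose_same F
  intro ψ hψ hz
  obtain ⟨GE, hGE, hPEh⟩ := exists_leftInv E hE
  obtain ⟨GF, hGF, hQFh⟩ := exists_leftInv F hF
  set P : Matrix (Fin k) (Fin k) ℂ := E * GE with hPdef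
  set Q : Matrix (Fin h) (Fin h) ℂ := F * GF with hQdef
  have hPE : P * E = E := by rw [hPdef, Matrix.mul_assoc, hGE, Matrix.mul_one]
  have hQF : Q * F = F := by rw [hQdef, Matrix.mul_assoc, hGF, Matrix.mul_one]
  have hEHP : Eᴴ * P = Eᴴ := by
    have h1 : Eᴴ * Pᴴ = Eᴴ := by rw [← Matrix.conjTranspose_mul, hPE]
    rwa [hPEh] at h1
  have hFHQ : Fᴴ * Q = Fᴴ := by
    have h1 : Fᴴ * Qᴴ = Fᴴ := by rw [← Matrix.conjTranspose_mul, hQF]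
    rwa [hQFh] at h1
  -- Step A: `ψ` kills rank-one operators supported in `ker Eᴴ`
  have stepA : ∀ ζ : Fin k → ℂ, Eᴴ.mulVec ζ = 0 → ψ (rankOne ζ) = 0 := by
    intro ζ h0
    apply quadZero; intro y
    apply hz ζ y
    show star y ⬝ᵥ (F * φ (Eᴴ * rankOne ζ * E) * Fᴴ).mulVec y = 0
    have hconj : Eᴴ * rankOne ζ * E = rankOne (Eᴴ.mulVec ζ) := by
      simpa using conj_rankOne Eᴴ ζ
    rw [hconj, h0, rankOne_zero, map_zero, Matrix.mul_zero, Matrix.zero_mul,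
      Matrix.zero_mulVec, dotProduct_zero]
  have polar : ∀ ζ : Fin k → ℂ, Eᴴ.mulVec ζ = 0 →
      ∀ ξ, ψ (vv ζ ξ) = 0 ∧ ψ (vv ξ ζ) = 0 := by
    intro ζ h0 ξ
    exact pos_polar ψ hψ ζ (stepA ζ h0) ξ
  -- Step B: the input projection is absorbed
  have stepB : ∀ X, ψ (P * X * P) = ψ X := by
    have hrk : ∀ η, (ψ.comp (sandL P P) - ψ) (rankOne η) = 0 := by
      intro η
      show ψ (P * rankOne η * P) - ψ (rankOne η) = 0
      have hPη : P * rankOne η * P = rankOne (P.mulVec η) := by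
        calc P * rankOne η * P = P * rankOne η * Pᴴ := by rw [hPEh]
          _ = rankOne (P.mulVec η) := conj_rankOne P η
      set ζ : Fin k → ℂ := η - P.mulVec η with hζdef
      have hζ0 : Eᴴ.mulVec ζ = 0 := by
        rw [hζdef, Matrix.mulVec_sub, Matrix.mulVec_mulVec, hEHP, sub_self]
      have hdecomp : rankOne η = rankOne (P.mulVec η) + vv (P.mulVec η) ζ
          + vv ζ (P.mulVec η) + rankOne ζ := by
        have hη : η = P.mulVec η + ζ := by rw [hζdef]; abel
        calc rankOne η = vv (P.mulVec η + ζ) (P.mulVec η + ζ) := by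
              rw [rankOne_eq_vv, ← hη]
          _ = _ := by rw [vv_add_add]; rfl
      rw [hPη, hdecomp, map_add, map_add, map_add, (polar ζ hζ0 _).2, (polar ζ hζ0 _).1,
        stepA ζ hζ0]
      simp
    intro X
    have h2 := span_vanish (ψ.comp (sandL P P) - ψ) hrk X
    rw [LinearMap.sub_apply, LinearMap.comp_apply] at h2
    exact sub_eq_zero.mp h2
  -- Step C: the output projection is absorbed
  have hFkill : ∀ y : Fin h → ℂ, Fᴴ.mulVec y = 0 → ∀ X, star y ⬝ᵥ (ψ X).mulVec y = 0 := by
    intro y h0 X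
    have hr : ∀ η, ((qformL y).comp ψ) (rankOne η) = 0 := by
      intro η
      show star y ⬝ᵥ (ψ (rankOne η)).mulVec y = 0
      apply hz η y
      show star y ⬝ᵥ (F * φ (Eᴴ * rankOne η * E) * Fᴴ).mulVec y = 0
      have hF2 : F * φ (Eᴴ * rankOne η * E) * Fᴴ = (Fᴴ)ᴴ * φ (Eᴴ * rankOne η * E) * Fᴴ := by
        rw [Matrix.conjTranspose_conjTranspose]
      rw [hF2, quadform_conj, h0]
      simp
    exact span_vanish ((qformL y).comp ψ) hr X
  have stepC : ∀ X, Q * ψ X * Q = ψ X := by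
    have hrk : ∀ η, ((sandL Q Q).comp ψ - ψ) (rankOne η) = 0 := by
      intro η
      show Q * ψ (rankOne η) * Q - ψ (rankOne η) = 0
      set M := ψ (rankOne η) with hM
      have hMpsd : M.PosSemidef := hψ _ (rankOne_posSemidef η)
      have hM1Q : M * (1 - Q) = 0 := by
        apply eq_zero_of_mulVec
        intro v
        have hy0 : Fᴴ.mulVec ((1 - Q).mulVec v) = 0 := by
          rw [Matrix.mulVec_mulVec]
          have hz2 : Fᴴ * (1 - Q) = 0 := by
            rw [Matrix.mul_sub, Matrix.mul_one, hFHQ, sub_self]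
          rw [hz2, Matrix.zero_mulVec]
        have hq := hFkill _ hy0 (rankOne η)
        have h3 := (hMpsd.dotProduct_mulVec_zero_iff ((1 - Q).mulVec v)).mp hq
        rw [← Matrix.mulVec_mulVec]
        exact h3
      have hMQ : M * Q = M := by
        rw [Matrix.mul_sub, Matrix.mul_one] at hM1Q
        exact (sub_eq_zero.mp hM1Q).symm
      have hQM : Q * M = M := by
        calc Q * M = Qᴴ * Mᴴ := by rw [hQFh, hMpsd.isHermitian.eq]
          _ = (M * Q)ᴴ := (Matrix.conjTranspose_mul M Q).symm
          _ = Mᴴ := by rw [hMQ]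
          _ = M := hMpsd.isHermitian.eq
      rw [hQM, hMQ, sub_self]
    intro X
    have h2 := span_vanish ((sandL Q Q).comp ψ - ψ) hrk X
    rw [LinearMap.sub_apply, LinearMap.comp_apply] at h2
    exact sub_eq_zero.mp h2
  -- the induced map `ψ'`
  set ψ' : Matrix (Fin k') (Fin k') ℂ →ₗ[ℂ] Matrix (Fin h') (Fin h') ℂ :=
    (sandL GF GFᴴ).comp (ψ.comp (sandL GEᴴ GE)) with hψ'def
  have hψ'apply : ∀ Y, ψ' Y = GF * ψ (GEᴴ * Y * GE) * GFᴴ := fun Y => rfl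
  have hGEEH : GEᴴ * Eᴴ = P := by
    rw [← Matrix.conjTranspose_mul, ← hPdef, hPEh]
  have hGFFH : GFᴴ * Fᴴ = Q := by
    rw [← Matrix.conjTranspose_mul, ← hQdef, hQFh]
  have hfact : ∀ X, ψ X = F * ψ' (Eᴴ * X * E) * Fᴴ := by
    intro X
    rw [hψ'apply]
    have h1 : GEᴴ * (Eᴴ * X * E) * GE = P * X * P := by
      calc GEᴴ * (Eᴴ * X * E) * GE = (GEᴴ * Eᴴ) * X * (E * GE) := by
            simp only [Matrix.mul_assoc]
        _ = P * X * P := by rw [hGEEH, ← hPdef]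
    rw [h1, stepB]
    have h2 : F * (GF * ψ X * GFᴴ) * Fᴴ = Q * ψ X * Q := by
      have h3 : F * (GF * ψ X * GFᴴ) * Fᴴ = (F * GF) * ψ X * (GFᴴ * Fᴴ) := by
        simp only [Matrix.mul_assoc]
      rw [h3, hGFFH, ← hQdef]
    rw [h2, stepC]
  have hψ'pos : IsPosMap ⇑ψ' := by
    intro Y hY
    rw [hψ'apply]
    exact (hψ _ (hY.conjTranspose_mul_mul_same GE)).mul_mul_conjTranspose_same GF
  have hz' : ∀ (ζ : Fin k' → ℂ) (y' : Fin h' → ℂ),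
      star y' ⬝ᵥ (φ (rankOne ζ)).mulVec y' = 0 →
        star y' ⬝ᵥ (ψ' (rankOne ζ)).mulVec y' = 0 := by
    intro ζ y' h0
    set η : Fin k → ℂ := GEᴴ.mulVec ζ with hη
    set y : Fin h → ℂ := GFᴴ.mulVec y' with hy
    have hEη : Eᴴ.mulVec η = ζ := by
      rw [hη, Matrix.mulVec_mulVec]
      have h1 : Eᴴ * GEᴴ = 1 := by
        rw [← Matrix.conjTranspose_mul, hGE, Matrix.conjTranspose_one]
      rw [h1, Matrix.one_mulVec]
    have hFy : Fᴴ.mulVec y = y' := by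
      rw [hy, Matrix.mulVec_mulVec]
      have h1 : Fᴴ * GFᴴ = 1 := by
        rw [← Matrix.conjTranspose_mul, hGF, Matrix.conjTranspose_one]
      rw [h1, Matrix.one_mulVec]
    have hconj : Eᴴ * rankOne η * E = rankOne ζ := by
      have h1 := conj_rankOne Eᴴ η
      rw [Matrix.conjTranspose_conjTranspose, hEη] at h1
      exact h1
    have hq0 : star y ⬝ᵥ ((fun X => F * φ (Eᴴ * X * E) * Fᴴ) (rankOne η)).mulVec y = 0 := by
      show star y ⬝ᵥ (F * φ (Eᴴ * rankOne η * E) * Fᴴ).mulVec y = 0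
      rw [hconj]
      have hF2 : F * φ (rankOne ζ) * Fᴴ = (Fᴴ)ᴴ * φ (rankOne ζ) * Fᴴ := by
        rw [Matrix.conjTranspose_conjTranspose]
      rw [hF2, quadform_conj, hFy]
      exact h0
    have hq1 := hz η y hq0
    have hkey : star y ⬝ᵥ (ψ (rankOne η)).mulVec y
        = star y' ⬝ᵥ (ψ' (rankOne ζ)).mulVec y' := by
      rw [hfact (rankOne η), hconj]
      have hF2 : F * ψ' (rankOne ζ) * Fᴴ = (Fᴴ)ᴴ * ψ' (rankOne ζ) * Fᴴ := by
        rw [Matrix.conjTranspose_conjTranspose]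
      rw [hF2, quadform_conj, hFy]
    rw [← hkey]
    exact hq1
  obtain ⟨c, hc0, hc⟩ := hφ.2 ψ' hψ'pos hz'
  refine ⟨c, hc0, fun X => ?_⟩
  show ψ X = (c:ℂ) • (F * φ (Eᴴ * X * E) * Fᴴ)
  rw [hfact X, hc, Matrix.mul_smul, Matrix.smul_mul]
end Paper
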